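/- Let β ∈ [0,1) and suppose β_n = β for all n. Then for every real c, lim_{n → ∞} d_n(t_n + (1−β)·r_n + c·w_n) = e^{−c}; that is, the sequence has a profile cutoff at (t_n + (1−β)·r_n, w_n) with profile F(c) = e^{−c}. In particular, for β = 0 this shows the right-window upper bound limsup_n d_n(t_n + r_n + c·w_n) ≤ e^{−c} is tight. -/

import Mathlib

open Filter Real
open scoped Topology

/-- `ℓ_n = log(n / log n)`. -/
noncomputable def ell (n : ℕ) : ℝ := Real.log (n / Real.log n)

/-- Distance to equilibrium of the Ornstein–Uhlenbeck example of Barrera–Ycart: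
`d_n(t) = Σ_{i=1}^{9^n} a_{i,n} e^{-ρ_{i,n} t}` with `a_{1,n} = e^n`,
`ρ_{1,n} = n/(1 + (β_n/n) ℓ_n)`, and for `2 ≤ i ≤ 9^n`:
`a_{i,n} = e^{-n}`, `ρ_{i,n} = log(e^n + (i-1) e^{-n})`. -/
noncomputable def dCut (β : ℕ → ℝ) (n : ℕ) (t : ℝ) : ℝ :=
  Real.exp n * Real.exp (-((n : ℝ) / (1 + β n / n * ell n)) * t) +
    ∑ i ∈ Finset.Icc (2 : ℕ) (9 ^ n),
      Real.exp (-(n : ℝ)) *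
        Real.exp (-Real.log (Real.exp n + ((i : ℝ) - 1) * Real.exp (-(n : ℝ))) * t)

/-- Cutoff location `t_n = 1 + β_n ℓ_n / n`. -/
noncomputable def cutT (β : ℕ → ℝ) (n : ℕ) : ℝ := 1 + β n * ell n / n

/-- Window width `w_n = t_n / n`. -/
noncomputable def cutW (β : ℕ → ℝ) (n : ℕ) : ℝ := cutT β n / n

/-- Correction term `r_n = ℓ_n w_n`. -/
noncomputable def cutR (β : ℕ → ℝ) (n : ℕ) : ℝ := ell n * cutW β n


private lemma ell_eq' {n : ℕ} (hn : 2 ≤ n) :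
    ell n = Real.log n - Real.log (Real.log n) := by
  have h1 : (1:ℝ) < n := by exact_mod_cast hn.trans_lt' one_lt_two
  have h2 : (0:ℝ) < Real.log n := Real.log_pos h1
  rw [ell, Real.log_div (by positivity) (ne_of_gt h2)]

private lemma ell_nonneg' {n : ℕ} (hn : 2 ≤ n) : 0 ≤ ell n := by
  have h1 : (1:ℝ) < n := by exact_mod_cast hn.trans_lt' one_lt_two
  have h2 : (0:ℝ) < Real.log n := Real.log_pos h1
  have h3 : Real.log n ≤ (n:ℝ) := (Real.log_le_sub_one_of_pos (by positivity)).trans (by linarith)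
  exact Real.log_nonneg ((one_le_div h2).mpr h3)

private lemma ell_le_log' {n : ℕ} (hn : 3 ≤ n) : ell n ≤ Real.log n := by
  have h1 : Real.exp 1 < (n:ℝ) := by
    have h := Real.exp_one_lt_d9
    have h3 : (3:ℝ) ≤ n := by exact_mod_cast hn
    linarith
  have h2 : 1 ≤ Real.log n := by
    rw [← Real.log_exp 1]
    exact Real.log_le_log (Real.exp_pos 1) h1.le
  have := Real.log_nonneg h2
  rw [ell_eq' (by omega)]
  linarith

private lemma sum_sandwich' (n : ℕ) (hn : 1 ≤ n) (s : ℝ) (hs : 1 < s) :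
    Real.exp ((1 - s) * Real.log (Real.exp n + Real.exp (-(n:ℝ)))) / (s - 1) -
        Real.exp ((1 - s) * Real.log (Real.exp n + (9:ℝ)^n * Real.exp (-(n:ℝ)))) / (s - 1) ≤
      ∑ i ∈ Finset.Icc (2:ℕ) (9^n), Real.exp (-(n:ℝ)) *
          Real.exp (-Real.log (Real.exp n + ((i:ℝ)-1) * Real.exp (-(n:ℝ))) * s) ∧
    ∑ i ∈ Finset.Icc (2:ℕ) (9^n), Real.exp (-(n:ℝ)) *
          Real.exp (-Real.log (Real.exp n + ((i:ℝ)-1) * Real.exp (-(n:ℝ))) * s) ≤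
      Real.exp ((1 - s) * n) / (s - 1) := by
  have hs0 : 0 < s := by linarith
  have hs1 : s - 1 ≠ 0 := sub_ne_zero.mpr hs.ne'
  set E : ℝ := Real.exp n with hE
  set ε : ℝ := Real.exp (-(n:ℝ)) with hε
  have hEpos : 0 < E := Real.exp_pos _
  have hεpos : 0 < ε := Real.exp_pos _
  set g : ℝ → ℝ := fun x => ε * Real.exp (-s * Real.log (E + x * ε)) with hg
  set H : ℝ → ℝ := fun x => -Real.exp ((1 - s) * Real.log (E + x * ε)) / (s - 1) with hH
  have hpos : ∀ x : ℝ, 0 ≤ x → 0 < E + x * ε := fun x hx => by positivity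
  -- derivative
  have hderiv : ∀ x : ℝ, 0 ≤ x → HasDerivAt H (g x) x := by
    intro x hx
    have hb : 0 < E + x * ε := hpos x hx
    have h1 : HasDerivAt (fun y : ℝ => E + y * ε) ε x := by
      simpa using ((hasDerivAt_id x).mul_const ε).const_add E
    have h2 : HasDerivAt (fun y : ℝ => Real.log (E + y * ε)) (ε / (E + x * ε)) x :=
      h1.log hb.ne'
    have h3 := (h2.const_mul (1 - s)).exp
    have h4 := (h3.neg).div_const (s - 1)
    convert h4 using 1
    · rfl
    · rfl
    · rfl
    have hexp : Real.exp ((1 - s) * Real.log (E + x * ε)) =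
        Real.exp (-s * Real.log (E + x * ε)) * (E + x * ε) := by
      rw [← Real.exp_log hb]
      rw [← Real.exp_add, Real.log_exp]
      ring_nf
    rw [hg]
    rw [hexp]
    field_simp
    ring
  -- antitone
  have hanti : ∀ x₀ : ℝ, 0 ≤ x₀ → ∀ a : ℕ, AntitoneOn g (Set.Icc x₀ (x₀ + a)) := by
    intro x₀ h0 a x hx y hy hxy
    have hx0 : 0 ≤ x := h0.trans hx.1
    have hy0 : 0 ≤ y := h0.trans hy.1
    have hlog : Real.log (E + x * ε) ≤ Real.log (E + y * ε) :=
      Real.log_le_log (hpos x hx0) (by nlinarith)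
    have : -s * Real.log (E + y * ε) ≤ -s * Real.log (E + x * ε) := by nlinarith
    exact mul_le_mul_of_nonneg_left (Real.exp_le_exp.mpr this) hεpos.le
  -- integral formula
  have hint : ∀ x₀ : ℝ, 0 ≤ x₀ → ∀ a : ℕ,
      (∫ x in x₀..(x₀ + a), g x) = H (x₀ + a) - H x₀ := by
    intro x₀ h0 a
    have hle : x₀ ≤ x₀ + a := le_add_of_nonneg_right (Nat.cast_nonneg a)
    apply intervalIntegral.integral_eq_sub_of_hasDerivAt
    · intro x hx
      rw [Set.uIcc_of_le hle] at hx
      exact hderiv x (h0.trans hx.1)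
    · apply ContinuousOn.intervalIntegrable
      apply ContinuousOn.mul continuousOn_const
      apply Real.continuous_exp.comp_continuousOn
      apply ContinuousOn.mul continuousOn_const
      apply ContinuousOn.log
      · fun_prop
      · intro x hx
        rw [Set.uIcc_of_le hle] at hx
        exact (hpos x (h0.trans hx.1)).ne'
  -- rewrite the sum
  set M : ℕ := 9 ^ n - 1 with hM
  have h9 : 1 ≤ 9 ^ n := Nat.one_le_pow _ _ (by norm_num)
  have hsum : ∑ i ∈ Finset.Icc (2:ℕ) (9^n), Real.exp (-(n:ℝ)) *
          Real.exp (-Real.log (Real.exp n + ((i:ℝ)-1) * Real.exp (-(n:ℝ))) * s)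
      = ∑ j ∈ Finset.range M, g (1 + (j:ℝ)) := by
    rw [← Finset.Ico_add_one_right_eq_Icc, Finset.sum_Ico_eq_sum_range]
    apply Finset.sum_congr (by rw [show 9^n + 1 - 2 = M by omega])
    intro j hj
    have h1 : ((2 + j : ℕ) : ℝ) - 1 = 1 + (j:ℝ) := by push_cast; ring
    rw [h1, hg]
    simp only [hε, hE]
    ring_nf
  rw [hsum]
  constructor
  · -- lower bound
    have h := (hanti 1 zero_le_one M).integral_le_sum
    rw [hint 1 zero_le_one M] at h
    have hcast : (1:ℝ) + (M:ℝ) = (9:ℝ)^n := by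
      rw [hM]
      push_cast [Nat.cast_sub h9]
      ring
    calc Real.exp ((1 - s) * Real.log (E + ε)) / (s - 1) -
          Real.exp ((1 - s) * Real.log (E + (9:ℝ)^n * ε)) / (s - 1)
        = H (1 + (M:ℝ)) - H 1 := by
          rw [hH]
          simp only [hcast, one_mul]
          ring
      _ ≤ ∑ j ∈ Finset.range M, g (1 + (j:ℝ)) := h
  · -- upper bound
    have h := (hanti 0 le_rfl M).sum_le_integral
    rw [hint 0 le_rfl M] at h
    have heq : ∑ j ∈ Finset.range M, g (0 + ((j + 1 : ℕ) : ℝ)) =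
        ∑ j ∈ Finset.range M, g (1 + (j:ℝ)) := by
      apply Finset.sum_congr rfl
      intro j _
      congr 1
      push_cast
      ring
    rw [heq] at h
    refine h.trans ?_
    have h1 : H ((0:ℝ) + (M:ℝ)) ≤ 0 := by
      rw [hH]
      have := Real.exp_pos ((1 - s) * Real.log (E + ((0:ℝ) + (M:ℝ)) * ε))
      exact div_nonpos_of_nonpos_of_nonneg (by linarith) (by linarith)
    have h2 : -H 0 = Real.exp ((1 - s) * (n:ℝ)) / (s - 1) := by
      rw [hH]
      simp only [hE, zero_mul, add_zero, Real.log_exp]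
      ring
    linarith

set_option maxHeartbeats 1600000 in
/-- Case `β_n ≡ β ∈ [0,1)` of Barrera–Ycart: a profile cutoff at
`(t_n + (1-β) r_n, w_n)` with profile `F(c) = e^{-c}` occurs: for every real `c`,
`d_n(t_n + (1-β) r_n + c w_n) → e^{-c}`. In particular (`β = 0`) the
right-window upper bound `limsup_n d_n(t_n + r_n + c w_n) ≤ e^{-c}` is tight. -/
theorem profile_cutoff_beta_const
    (βc : ℝ) (hβ0 : 0 ≤ βc) (hβ1 : βc < 1)
    (β : ℕ → ℝ) (hβ : ∀ n, β n = βc) (c : ℝ) :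
    Tendsto (fun n => dCut β n (cutT β n + (1 - βc) * cutR β n + c * cutW β n))
      atTop (𝓝 (Real.exp (-c))) := by
  -- basic asymptotics
  have hlogx : Tendsto (fun x : ℝ => Real.log x / x) atTop (𝓝 0) := by
    simpa using Real.tendsto_pow_log_div_mul_add_atTop 1 0 1 one_ne_zero
  have hlogn : Tendsto (fun n : ℕ => Real.log n) atTop atTop :=
    Real.tendsto_log_atTop.comp tendsto_natCast_atTop_atTop
  have hratio : Tendsto (fun n : ℕ => Real.log (Real.log n) / Real.log n) atTop (𝓝 0) :=
    hlogx.comp hlogn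
  have hlogn_div : Tendsto (fun n : ℕ => Real.log n / n) atTop (𝓝 0) :=
    hlogx.comp tendsto_natCast_atTop_atTop
  have hlog2_div : Tendsto (fun n : ℕ => Real.log n ^ 2 / n) atTop (𝓝 0) := by
    have h := Real.tendsto_pow_log_div_mul_add_atTop 1 0 2 one_ne_zero
    have h2 := h.comp tendsto_natCast_atTop_atTop
    simpa [Function.comp_def] using h2
  have h1m : Tendsto (fun n : ℕ => 1 - Real.log (Real.log n) / Real.log n) atTop (𝓝 1) := by
    simpa using tendsto_const_nhds.sub hratio
  have hell : Tendsto ell atTop atTop := by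
    apply Tendsto.congr' _ (hlogn.atTop_mul_pos one_pos h1m)
    filter_upwards [eventually_ge_atTop 2] with n hn
    have h2 : (0:ℝ) < Real.log n := Real.log_pos (by exact_mod_cast hn.trans_lt' one_lt_two)
    rw [ell_eq' hn]
    field_simp
  have hell_div : Tendsto (fun n : ℕ => ell n / Real.log n) atTop (𝓝 1) := by
    apply Tendsto.congr' _ h1m
    filter_upwards [eventually_ge_atTop 2] with n hn
    have h2 : (0:ℝ) < Real.log n := Real.log_pos (by exact_mod_cast hn.trans_lt' one_lt_two)
    rw [ell_eq' hn]
    field_simp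
  -- the small correction term
  set δ : ℕ → ℝ := fun n => βc * ell n * ((1 - βc) * ell n + c) / n with hδdef
  have hδ : Tendsto δ atTop (𝓝 0) := by
    have hg0 : Tendsto (fun n : ℕ =>
        βc * (1 - βc) * (Real.log n ^ 2 / n) + βc * |c| * (Real.log n / n)) atTop (𝓝 0) := by
      simpa using (hlog2_div.const_mul (βc * (1 - βc))).add (hlogn_div.const_mul (βc * |c|))
    apply squeeze_zero_norm' _ hg0
    filter_upwards [eventually_ge_atTop 3] with n hn
    have hl0 : 0 ≤ ell n := ell_nonneg' (by omega)
    have hll : ell n ≤ Real.log n := ell_le_log' hn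
    have hn0 : (0:ℝ) < n := by
      have : (3:ℝ) ≤ n := by exact_mod_cast hn
      linarith
    have hlog0 : 0 ≤ Real.log n := hl0.trans hll
    have hX : |(1 - βc) * ell n + c| ≤ (1 - βc) * Real.log n + |c| := by
      refine (abs_add_le _ _).trans ?_
      have h1 : |(1 - βc) * ell n| = (1 - βc) * ell n := abs_of_nonneg (by nlinarith)
      rw [h1]
      have : (1 - βc) * ell n ≤ (1 - βc) * Real.log n := by nlinarith
      linarith
    have key : ‖δ n‖ = βc * ell n * |(1 - βc) * ell n + c| / n := by
      rw [Real.norm_eq_abs, hδdef]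
      rw [abs_div, abs_mul, abs_of_nonneg (mul_nonneg hβ0 hl0), abs_of_pos hn0]
    rw [key]
    have hnum : βc * ell n * |(1 - βc) * ell n + c| ≤
        βc * (1 - βc) * Real.log n ^ 2 + βc * |c| * Real.log n := by
      have hB0 : 0 ≤ (1 - βc) * Real.log n + |c| :=
        add_nonneg (mul_nonneg (by linarith) hlog0) (abs_nonneg c)
      have s1 : βc * ell n * |(1 - βc) * ell n + c| ≤
          βc * ell n * ((1 - βc) * Real.log n + |c|) :=
        mul_le_mul_of_nonneg_left hX (mul_nonneg hβ0 hl0)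
      have s2 : βc * ell n * ((1 - βc) * Real.log n + |c|) ≤
          βc * Real.log n * ((1 - βc) * Real.log n + |c|) := by
        apply mul_le_mul_of_nonneg_right _ hB0
        nlinarith
      have h2 := s1.trans s2
      nlinarith
    rw [div_le_iff₀ hn0]
    have h3 : (βc * (1 - βc) * (Real.log n ^ 2 / n) + βc * |c| * (Real.log n / n)) * n =
        βc * (1 - βc) * Real.log n ^ 2 + βc * |c| * Real.log n := by
      field_simp
    rw [h3]
    exact hnum
  -- the normalized exponent q
  set q : ℕ → ℝ := fun n => ell n + c + δ n with hqdef
  have hq_top : Tendsto q atTop atTop := by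
    have h1 : Tendsto (fun n : ℕ => ell n + c) atTop atTop :=
      tendsto_atTop_add_const_right atTop c hell
    apply tendsto_atTop_add_right_of_le' atTop (-1) h1
    filter_upwards [hδ.eventually (eventually_ge_nhds (by norm_num : (-1:ℝ) < 0))] with n hn
    exact hn
  have hq_pos : ∀ᶠ n in atTop, 1 ≤ q n := hq_top.eventually_ge_atTop 1
  have hq_div_log : Tendsto (fun n : ℕ => q n / Real.log n) atTop (𝓝 1) := by
    have h2 : Tendsto (fun n : ℕ => (c + δ n) / Real.log n) atTop (𝓝 0) :=
      (tendsto_const_nhds.add hδ).div_atTop hlogn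
    have h3 := hell_div.add h2
    apply Tendsto.congr' _ (by simpa using h3)
    apply Eventually.of_forall
    intro n
    show ell n / Real.log n + (c + δ n) / Real.log n = q n / Real.log n
    have hqn : q n = ell n + c + δ n := rfl
    rw [hqn]
    ring
  have hlogq : Tendsto (fun n : ℕ => Real.log (q n) - Real.log (Real.log n)) atTop (𝓝 0) := by
    have h1 : Tendsto (fun n : ℕ => Real.log (q n / Real.log n)) atTop (𝓝 0) := by
      have := (Real.continuousAt_log one_ne_zero).tendsto.comp hq_div_log
      simpa [Function.comp_def] using this
    apply Tendsto.congr' _ h1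
    filter_upwards [eventually_ge_atTop 2, hq_pos] with n hn hq1
    have h2 : (0:ℝ) < Real.log n := Real.log_pos (by exact_mod_cast hn.trans_lt' one_lt_two)
    rw [Real.log_div (by linarith) h2.ne']
  have hExp : Tendsto (fun n : ℕ => Real.log n - q n - Real.log (q n)) atTop (𝓝 (-c)) := by
    have h1 := ((tendsto_const_nhds (x := -c) (f := (atTop : Filter ℕ))).sub hδ).sub hlogq
    apply Tendsto.congr' _ (by simpa using h1)
    filter_upwards [eventually_ge_atTop 2] with n hn
    have hqn : q n = ell n + c + δ n := rfl
    rw [hqn, ell_eq' hn]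
    ring
  have hqn0 : Tendsto (fun n : ℕ => q n / n) atTop (𝓝 0) := by
    have h1 := hq_div_log.mul hlogn_div
    apply Tendsto.congr' _ (by simpa using h1)
    filter_upwards [eventually_ge_atTop 2] with n hn
    have h2 : Real.log n ≠ 0 := (Real.log_pos (by exact_mod_cast hn.trans_lt' one_lt_two)).ne'
    have h3 : (n:ℝ) ≠ 0 := by positivity
    field_simp
  have hη : Tendsto (fun n : ℕ => Real.log (Real.exp n + Real.exp (-(n:ℝ))) - n) atTop (𝓝 0) := by
    have h1 : Tendsto (fun n : ℕ => Real.exp (-(2 * (n:ℝ)))) atTop (𝓝 0) := by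
      apply Real.tendsto_exp_atBot.comp
      apply tendsto_neg_atTop_atBot.comp
      exact Tendsto.const_mul_atTop two_pos tendsto_natCast_atTop_atTop
    have h2 : Tendsto (fun n : ℕ => Real.log (1 + Real.exp (-(2 * (n:ℝ))))) atTop (𝓝 0) := by
      have h3 := (Real.continuousAt_log (by norm_num : (1:ℝ) + 0 ≠ 0)).tendsto.comp
        (tendsto_const_nhds.add h1)
      simpa [Function.comp_def] using h3
    apply Tendsto.congr' _ h2
    apply Eventually.of_forall
    intro n
    have he : Real.exp (n:ℝ) + Real.exp (-(n:ℝ)) = Real.exp (n:ℝ) * (1 + Real.exp (-(2*(n:ℝ)))) := by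
      rw [mul_add, mul_one, ← Real.exp_add]
      ring_nf
    show Real.log (1 + Real.exp (-(2 * (n:ℝ)))) = Real.log (Real.exp n + Real.exp (-(n:ℝ))) - n
    rw [he, Real.log_mul (Real.exp_ne_zero _) (by positivity), Real.log_exp]
    ring
  have h9log : (2:ℝ) < Real.log 9 := by
    rw [Real.lt_log_iff_exp_lt (by norm_num)]
    have h := Real.exp_one_lt_d9
    have h2 : Real.exp 2 = Real.exp 1 * Real.exp 1 := by
      rw [← Real.exp_add]; norm_num
    nlinarith [Real.exp_pos 1]
  -- the evaluation point
  set pt : ℕ → ℝ := fun n => cutT β n + (1 - βc) * cutR β n + c * cutW β n with hptdef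
  have hpt_eq : ∀ n : ℕ, 1 ≤ n → pt n = 1 + q n / n := by
    intro n hn
    have hn0 : (n:ℝ) ≠ 0 := Nat.cast_ne_zero.mpr (by omega)
    show cutT β n + (1 - βc) * cutR β n + c * cutW β n = 1 + q n / n
    have hqn : q n = ell n + c + βc * ell n * ((1 - βc) * ell n + c) / n := rfl
    rw [hqn]
    simp only [cutT, cutR, cutW, hβ]
    field_simp
    ring
  have key : ∀ n : ℕ, 2 ≤ n → 1 ≤ q n → ∀ u : ℝ,
      Real.exp u / (q n / n) = Real.exp (u + Real.log n - Real.log (q n)) := by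
    intro n hn hq1 u
    have hn0 : (0:ℝ) < n := by
      have : (2:ℝ) ≤ n := by exact_mod_cast hn
      linarith
    have hq0 : (0:ℝ) < q n := by linarith
    rw [Real.exp_sub, Real.exp_add, Real.exp_log hn0, Real.exp_log hq0]
    field_simp
  -- upper bound limit
  have hU : Tendsto (fun n : ℕ => Real.exp ((1 - pt n) * n) / (pt n - 1)) atTop
      (𝓝 (Real.exp (-c))) := by
    have h1 := (Real.continuous_exp.tendsto (-c)).comp hExp
    apply Tendsto.congr' _ h1
    filter_upwards [eventually_ge_atTop 2, hq_pos] with n hn hq1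
    show Real.exp (Real.log n - q n - Real.log (q n)) = _
    rw [hpt_eq n (by omega)]
    have hn0 : (n:ℝ) ≠ 0 := Nat.cast_ne_zero.mpr (by omega)
    have h3 : (1 - (1 + q n / n)) * (n:ℝ) = -(q n) := by field_simp; ring
    have h4 : 1 + q n / n - 1 = q n / n := by ring
    rw [h3, h4, key n hn hq1]
    congr 1
    ring
  -- lower bound, main part
  have hL1 : Tendsto (fun n : ℕ =>
      Real.exp ((1 - pt n) * Real.log (Real.exp n + Real.exp (-(n:ℝ)))) / (pt n - 1))
      atTop (𝓝 (Real.exp (-c))) := by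
    have he2 : Tendsto (fun n : ℕ => (Real.log n - q n - Real.log (q n)) -
        (q n / n) * (Real.log (Real.exp n + Real.exp (-(n:ℝ))) - n)) atTop (𝓝 (-c)) := by
      simpa using hExp.sub (hqn0.mul hη)
    have h1 := (Real.continuous_exp.tendsto (-c)).comp he2
    apply Tendsto.congr' _ h1
    filter_upwards [eventually_ge_atTop 2, hq_pos] with n hn hq1
    show Real.exp _ = _
    rw [hpt_eq n (by omega)]
    have hn0 : (n:ℝ) ≠ 0 := Nat.cast_ne_zero.mpr (by omega)
    have h3 : (1 - (1 + q n / n)) * Real.log (Real.exp n + Real.exp (-(n:ℝ))) =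
        -(q n) - (q n / n) * (Real.log (Real.exp n + Real.exp (-(n:ℝ))) - n) := by
      field_simp
      ring
    have h4 : 1 + q n / n - 1 = q n / n := by ring
    rw [h3, h4, key n hn hq1]
    congr 1
    ring
  -- lower bound, vanishing tail
  have hL2 : Tendsto (fun n : ℕ =>
      Real.exp ((1 - pt n) * Real.log (Real.exp n + (9:ℝ)^n * Real.exp (-(n:ℝ)))) / (pt n - 1))
      atTop (𝓝 0) := by
    have hbnd : Tendsto (fun n : ℕ => (Real.log n - q n - Real.log (q n)) +
        -((Real.log 9 - 2) * q n)) atTop atBot := by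
      apply tendsto_atBot_add_left_of_ge' atTop (-c + 1)
      · exact hExp.eventually (eventually_le_nhds (by linarith))
      · exact tendsto_neg_atTop_atBot.comp (Tendsto.const_mul_atTop (by linarith) hq_top)
    have he2 : Tendsto (fun n : ℕ =>
        (1 - pt n) * Real.log (Real.exp n + (9:ℝ)^n * Real.exp (-(n:ℝ)))
          + Real.log n - Real.log (q n)) atTop atBot := by
      apply tendsto_atBot_mono' atTop _ hbnd
      filter_upwards [eventually_ge_atTop 2, hq_pos] with n hn hq1
      have hn0 : (0:ℝ) < n := by
        have : (2:ℝ) ≤ n := by exact_mod_cast hn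
        linarith
      have hq0 : (0:ℝ) < q n := by linarith
      have hB : (n:ℝ) * (Real.log 9 - 1) ≤
          Real.log (Real.exp n + (9:ℝ)^n * Real.exp (-(n:ℝ))) := by
        have h1 : (9:ℝ)^n * Real.exp (-(n:ℝ)) ≤
            Real.exp n + (9:ℝ)^n * Real.exp (-(n:ℝ)) := le_add_of_nonneg_left (Real.exp_pos _).le
        have h2 := Real.log_le_log (by positivity) h1
        rw [Real.log_mul (by positivity) (Real.exp_ne_zero _), Real.log_pow, Real.log_exp] at h2
        nlinarith
      rw [hpt_eq n (by omega)]
      have hqn' : (0:ℝ) ≤ q n / n := by positivity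
      have h5 : q n / n * ((n:ℝ) * (Real.log 9 - 1)) ≤
          q n / n * Real.log (Real.exp n + (9:ℝ)^n * Real.exp (-(n:ℝ))) :=
        mul_le_mul_of_nonneg_left hB hqn'
      have h6 : q n / n * ((n:ℝ) * (Real.log 9 - 1)) = q n * (Real.log 9 - 1) := by
        field_simp
      rw [h6] at h5
      have h7 : (1 - (1 + q n / n)) * Real.log (Real.exp n + (9:ℝ)^n * Real.exp (-(n:ℝ)))
          = -(q n / n * Real.log (Real.exp n + (9:ℝ)^n * Real.exp (-(n:ℝ)))) := by ring
      rw [h7]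
      linarith
    have h1 : Tendsto (fun n : ℕ =>
        Real.exp ((1 - pt n) * Real.log (Real.exp n + (9:ℝ)^n * Real.exp (-(n:ℝ)))
          + Real.log n - Real.log (q n))) atTop (𝓝 0) := Real.tendsto_exp_atBot.comp he2
    apply Tendsto.congr' _ h1
    filter_upwards [eventually_ge_atTop 2, hq_pos] with n hn hq1
    rw [hpt_eq n (by omega)]
    have h4 : 1 + q n / n - 1 = q n / n := by ring
    rw [h4, key n hn hq1]
  -- squeeze for the sum
  have hpt1 : ∀ᶠ n in atTop, 1 < pt n := by
    filter_upwards [eventually_ge_atTop 2, hq_pos] with n hn hq1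
    rw [hpt_eq n (by omega)]
    have hn0 : (0:ℝ) < n := by
      have : (2:ℝ) ≤ n := by exact_mod_cast hn
      linarith
    have : 0 < q n / n := by positivity
    linarith
  have hS : Tendsto (fun n : ℕ => ∑ i ∈ Finset.Icc (2:ℕ) (9^n), Real.exp (-(n:ℝ)) *
      Real.exp (-Real.log (Real.exp n + ((i:ℝ)-1) * Real.exp (-(n:ℝ))) * pt n)) atTop
      (𝓝 (Real.exp (-c))) := by
    have hLlim := hL1.sub hL2
    rw [sub_zero] at hLlim
    apply tendsto_of_tendsto_of_tendsto_of_le_of_le' hLlim hU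
    · filter_upwards [eventually_ge_atTop 2, hpt1] with n hn hp
      exact (sum_sandwich' n (by omega) (pt n) hp).1
    · filter_upwards [eventually_ge_atTop 2, hpt1] with n hn hp
      exact (sum_sandwich' n (by omega) (pt n) hp).2
  -- the first (spectral-gap) term vanishes
  have hA : Tendsto (fun n : ℕ =>
      Real.exp n * Real.exp (-((n:ℝ) / (1 + β n / n * ell n)) * pt n)) atTop (𝓝 0) := by
    have h1 : Tendsto (fun n : ℕ => -((1 - βc) * ell n + c)) atTop atBot := by
      apply tendsto_neg_atTop_atBot.comp
      apply tendsto_atTop_add_const_right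
      exact Tendsto.const_mul_atTop (by linarith) hell
    have h2 : Tendsto (fun n : ℕ => Real.exp (-((1 - βc) * ell n + c))) atTop (𝓝 0) :=
      Real.tendsto_exp_atBot.comp h1
    apply Tendsto.congr' _ h2
    filter_upwards [eventually_ge_atTop 2] with n hn
    have hn0 : (0:ℝ) < n := by
      have : (2:ℝ) ≤ n := by exact_mod_cast hn
      linarith
    have hl0 : 0 ≤ ell n := ell_nonneg' hn
    have hden : (0:ℝ) < 1 + βc / n * ell n := by positivity
    have hptn : pt n = cutT β n + (1 - βc) * cutR β n + c * cutW β n := rfl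
    rw [← Real.exp_add]
    congr 1
    rw [hptn]
    simp only [cutT, cutR, cutW, hβ]
    field_simp
    ring
  have hfinal := hA.add hS
  have hptn : ∀ n : ℕ, pt n = cutT β n + (1 - βc) * cutR β n + c * cutW β n := fun n => rfl
  simp only [hptn] at hfinal
  simp only [dCut]
  rw [show Real.exp (-c) = 0 + Real.exp (-c) by ring]
  exact hfinal
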